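/- Let Φ be the cumulative distribution function of the standard normal distribution. Then the functions a ↦ log Φ(a) and a ↦ log(1 − Φ(a)) are concave on ℝ. Consequently, for each y ∈ {0,1}, the probit log-likelihood contribution a ↦ y log Φ(a) + (1−y) log(1−Φ(a)) is concave on ℝ. -/

import Mathlib

open MeasureTheory Real Set Filter

/-- The standard normal cumulative distribution function
`Φ(a) = ∫_{−∞}^a (2π)^{−1/2} e^{−t²/2} dt`. -/
noncomputable def stdNormalCDF (a : ℝ) : ℝ :=
  ∫ t in Set.Iic a, (Real.sqrt (2 * Real.pi))⁻¹ * Real.exp (-(t ^ 2) / 2)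

namespace Probit

noncomputable def c : ℝ := (Real.sqrt (2 * Real.pi))⁻¹

noncomputable def g (t : ℝ) : ℝ := c * Real.exp (-(t ^ 2) / 2)

lemma c_pos : 0 < c := by
  have : (0:ℝ) < Real.sqrt (2 * Real.pi) := Real.sqrt_pos.mpr (by positivity)
  exact inv_pos.mpr this

lemma g_pos (t : ℝ) : 0 < g t := mul_pos c_pos (Real.exp_pos _)

lemma g_cont : Continuous g := by
  unfold g; continuity

lemma g_eq (t : ℝ) : g t = c * Real.exp (-(1/2 : ℝ) * t ^ 2) := by
  unfold g; ring_nf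

lemma g_int : Integrable g := by
  have h := integrable_exp_neg_mul_sq (by norm_num : (0:ℝ) < 1/2)
  have := h.const_mul c
  refine this.congr ?_
  filter_upwards with t
  rw [g_eq]

lemma tg_int : Integrable (fun t : ℝ => t * g t) := by
  have h := integrable_mul_exp_neg_mul_sq (by norm_num : (0:ℝ) < 1/2)
  have := h.const_mul c
  refine this.congr ?_
  filter_upwards with t
  rw [g_eq]; ring

lemma Phi_eq (a : ℝ) : stdNormalCDF a = ∫ t in Set.Iic a, g t := rfl

lemma Phi_pos (a : ℝ) : 0 < stdNormalCDF a := by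
  rw [Phi_eq]
  rw [setIntegral_pos_iff_support_of_nonneg_ae]
  · have : Function.support g = Set.univ := by
      ext t; simp [Function.mem_support, (g_pos t).ne']
    rw [this, Set.univ_inter]
    simp [Real.volume_Iic]
  · filter_upwards with t using (g_pos t).le
  · exact g_int.integrableOn

lemma total : ∫ t, g t = 1 := by
  have h : ∫ t : ℝ, Real.exp (-(1/2:ℝ) * t ^ 2) = Real.sqrt (Real.pi / (1/2)) :=
    integral_gaussian (1/2)
  have h2 : ∫ t, g t = c * Real.sqrt (Real.pi / (1/2)) := by
    rw [← h, ← integral_const_mul]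
    congr 1; ext t; rw [g_eq]
  rw [h2]
  have : Real.pi / (1/2 : ℝ) = 2 * Real.pi := by ring
  rw [this]
  unfold c
  rw [inv_mul_cancel₀]
  exact (Real.sqrt_pos.mpr (by positivity)).ne'

lemma Phi_lt_one (a : ℝ) : stdNormalCDF a < 1 := by
  have hc : (∫ t in Set.Iic a, g t) + ∫ t in (Set.Iic a)ᶜ, g t = ∫ t, g t :=
    integral_add_compl measurableSet_Iic g_int
  have hpos : 0 < ∫ t in (Set.Iic a)ᶜ, g t := by
    rw [setIntegral_pos_iff_support_of_nonneg_ae]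
    · have : Function.support g = Set.univ := by
        ext t; simp [Function.mem_support, (g_pos t).ne']
      rw [this, Set.univ_inter, Set.compl_Iic]
      simp [Real.volume_Ioi]
    · filter_upwards with t using (g_pos t).le
    · exact g_int.integrableOn
  have := total
  rw [Phi_eq]
  linarith [hc]

lemma Phi_hasDeriv (a : ℝ) : HasDerivAt stdNormalCDF (g a) a := by
  have key : ∀ x : ℝ, stdNormalCDF x = stdNormalCDF 0 + ∫ t in (0:ℝ)..x, g t := by
    intro x
    have h : (∫ t in Set.Iic x, g t) - ∫ t in Set.Iic (0:ℝ), g t = ∫ t in (0:ℝ)..x, g t :=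
      intervalIntegral.integral_Iic_sub_Iic g_int.integrableOn g_int.integrableOn
    rw [Phi_eq, Phi_eq]
    linarith
  have hderiv : HasDerivAt (fun x => stdNormalCDF 0 + ∫ t in (0:ℝ)..x, g t) (g a) a := by
    apply HasDerivAt.const_add
    exact intervalIntegral.integral_hasDerivAt_right
      g_int.intervalIntegrable
      (g_cont.stronglyMeasurableAtFilter _ _)
      g_cont.continuousAt
  exact hderiv.congr_of_eventuallyEq (Filter.Eventually.of_forall key)

lemma g_hasDeriv (a : ℝ) : HasDerivAt g (-a * g a) a := by
  have h1 : HasDerivAt (fun t : ℝ => -(t ^ 2) / 2) (-a) a := by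
    have : HasDerivAt (fun t : ℝ => t ^ 2) (2 * a) a := by
      simpa using (hasDerivAt_pow 2 a)
    have := (this.neg.div_const 2)
    exact this.congr_deriv (by ring)
  have h2 := (h1.exp).const_mul c
  exact h2.congr_deriv (by unfold g; ring)

lemma int_tg (a : ℝ) : ∫ t in Set.Iic a, t * g t = -(g a) := by
  have hd : ∀ x ∈ Set.Iio a, HasDerivAt (fun t => -(g t)) (x * g x) x := by
    intro x _
    have := (g_hasDeriv x).neg
    exact this.congr_deriv (by ring)
  have hlim : Tendsto (fun t => -(g t)) atBot (nhds 0) := by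
    have hexp : Tendsto (fun t : ℝ => -(t ^ 2) / 2) atBot atBot := by
      apply tendsto_atBot_mono' atBot _ tendsto_id
      filter_upwards [eventually_le_atBot (-2:ℝ)] with t ht
      simp only [id_eq]
      have h1 : 0 ≤ (-t) * (-(t + 2)) := mul_nonneg (by linarith) (by linarith)
      nlinarith
    have h0 : Tendsto (fun t : ℝ => g t) atBot (nhds 0) := by
      have := (Real.tendsto_exp_atBot.comp hexp).const_mul c
      simpa [g, mul_zero] using this
    simpa [neg_zero] using h0.neg
  have := MeasureTheory.integral_Iic_of_hasDerivAt_of_tendsto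
    ((g_cont.neg.continuousAt).continuousWithinAt) hd
    (tg_int.integrableOn) hlim
  rw [this]; simp

-- key inequality
lemma key_ineq (a : ℝ) : 0 ≤ a * stdNormalCDF a + g a := by
  rcases le_or_gt 0 a with ha | ha
  · have := Phi_pos a
    nlinarith [g_pos a]
  · -- a < 0 : Φ a ≤ ∫ (t/a) g t = -(g a)/a
    have hmono : stdNormalCDF a ≤ ∫ t in Set.Iic a, (t / a) * g t := by
      rw [Phi_eq]
      apply setIntegral_mono_on g_int.integrableOn
        ((tg_int.div_const a).congr (by filter_upwards with t; ring)).integrableOn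
        measurableSet_Iic
      intro t ht
      have ht' : t ≤ a := ht
      have h1 : 1 ≤ t / a := by
        rw [le_div_iff_of_neg ha]
        linarith
      nlinarith [g_pos t]
    have hint : ∫ t in Set.Iic a, (t / a) * g t = -(g a) / a := by
      have : ∀ t, (t / a) * g t = (1/a) * (t * g t) := by intro t; ring
      simp_rw [this]
      rw [integral_const_mul, int_tg]
      ring
    rw [hint] at hmono
    have : a * stdNormalCDF a ≥ a * (-(g a)/a) := by
      exact mul_le_mul_of_nonpos_left hmono ha.le
    have h2 : a * (-(g a)/a) = -(g a) := by
      rw [mul_comm, div_mul_cancel₀ _ ha.ne]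
    linarith [this, h2.symm.le]


lemma logPhi_hasDeriv (a : ℝ) :
    HasDerivAt (fun x => Real.log (stdNormalCDF x)) (g a / stdNormalCDF a) a :=
  (Phi_hasDeriv a).log (Phi_pos a).ne'

lemma ratio_hasDeriv (a : ℝ) :
    HasDerivAt (fun x => g x / stdNormalCDF x)
      ((-a * g a * stdNormalCDF a - g a * g a) / stdNormalCDF a ^ 2) a :=
  (g_hasDeriv a).div (Phi_hasDeriv a) (Phi_pos a).ne'

lemma ratio_anti : Antitone (fun x => g x / stdNormalCDF x) := by
  apply antitone_of_deriv_nonpos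
  · exact fun a => (ratio_hasDeriv a).differentiableAt
  · intro a
    rw [(ratio_hasDeriv a).deriv]
    apply div_nonpos_of_nonpos_of_nonneg
    · nlinarith [key_ineq a, g_pos a]
    · positivity

lemma concave_logPhi : ConcaveOn ℝ Set.univ (fun a => Real.log (stdNormalCDF a)) := by
  apply AntitoneOn.concaveOn_of_deriv convex_univ
  · exact Continuous.continuousOn (by
      exact continuous_iff_continuousAt.mpr fun a => (logPhi_hasDeriv a).continuousAt)
  · intro a _
    exact (logPhi_hasDeriv a).differentiableAt.differentiableWithinAt
  · rw [interior_univ]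
    have : deriv (fun x => Real.log (stdNormalCDF x)) = fun x => g x / stdNormalCDF x := by
      funext x; exact (logPhi_hasDeriv x).deriv
    rw [this]
    exact ratio_anti.antitoneOn _

lemma Phi_neg (a : ℝ) : stdNormalCDF (-a) = 1 - stdNormalCDF a := by
  have hsym : ∀ x : ℝ, g (-x) = g x := by
    intro x; unfold g; rw [neg_pow]; norm_num
  have h1 : ∫ x in Set.Iic (-a), g x = ∫ x in Set.Ioi a, g x := by
    have h := integral_comp_neg_Iic (-a) g
    rw [neg_neg] at h
    rw [← h]
    exact setIntegral_congr_fun measurableSet_Iic fun x _ => (hsym x).symm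
  have hc : (∫ t in Set.Iic a, g t) + ∫ t in (Set.Iic a)ᶜ, g t = ∫ t, g t :=
    integral_add_compl measurableSet_Iic g_int
  rw [Set.compl_Iic] at hc
  rw [Phi_eq, Phi_eq, h1]
  rw [total] at hc
  linarith

lemma concave_logOneSubPhi :
    ConcaveOn ℝ Set.univ (fun a => Real.log (1 - stdNormalCDF a)) := by
  have heq : (fun a => Real.log (1 - stdNormalCDF a))
      = fun a => Real.log (stdNormalCDF (-a)) := by
    funext a; rw [Phi_neg]
  rw [heq]
  refine ⟨convex_univ, ?_⟩
  intro x _ y _ p q hp hq hpq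
  have := concave_logPhi.2 (Set.mem_univ (-x)) (Set.mem_univ (-y)) hp hq hpq
  have harg : p • (-x) + q • (-y) = -(p • x + q • y) := by
    simp [smul_eq_mul]; ring
  rw [harg] at this
  simpa using this

end Probit

/-- `a ↦ log Φ(a)` and `a ↦ log(1 − Φ(a))` are concave on `ℝ`; consequently, for each
`y ∈ {0,1}` the probit log-likelihood contribution
`a ↦ y log Φ(a) + (1−y) log(1−Φ(a))` is concave on `ℝ`. -/
theorem stmt_18 :
    ConcaveOn ℝ Set.univ (fun a => Real.log (stdNormalCDF a)) ∧
    ConcaveOn ℝ Set.univ (fun a => Real.log (1 - stdNormalCDF a)) ∧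
    ∀ y : ℝ, y = 0 ∨ y = 1 →
      ConcaveOn ℝ Set.univ
        (fun a => y * Real.log (stdNormalCDF a) + (1 - y) * Real.log (1 - stdNormalCDF a)) := by
  refine ⟨Probit.concave_logPhi, Probit.concave_logOneSubPhi, ?_⟩
  rintro y (rfl | rfl)
  · simpa using Probit.concave_logOneSubPhi
  · simpa using Probit.concave_logPhi
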